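/- For every positive integer r there exists a constant C_r > 0, depending only on r, such that for all positive integers a₁, …, a_r one has |E[∏_{i=1}^r (Y_{a_i} − τ(a_i))]| ≤ C_r · a₁² ⋯ a_r². (Since E[Y_a] = τ(a), this is the bound |E[∏_{i=1}^r (Y_{a_i} − E[Y_{a_i}])]| ≤ C_r · a₁² ⋯ a_r² on centered joint moments.) -/

import Mathlib

open MeasureTheory ProbabilityTheory Finset

private lemma lintegral_finset_prod_of_iIndep {Ω : Type*} [MeasurableSpace Ω]
    {μ : Measure Ω} [IsProbabilityMeasure μ] {f : ℕ → Ω → ENNReal}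
    (hf : ∀ i, Measurable (f i))
    (h : iIndepFun f μ) (s : Finset ℕ) :
    ∫⁻ ω, ∏ d ∈ s, f d ω ∂μ = ∏ d ∈ s, ∫⁻ ω, f d ω ∂μ := by
  classical
  induction s using Finset.cons_induction with
  | empty => simp
  | cons i s hi ih =>
    simp only [Finset.prod_cons]
    have hind : IndepFun (∏ j ∈ s, f j) (f i) μ :=
      h.indepFun_finsetProd_of_notMem hf hi
    have hps : Measurable (∏ j ∈ s, f j) := by
      rw [show (∏ j ∈ s, f j) = fun a => ∏ j ∈ s, f j a from funext fun a => Finset.prod_apply a s f]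
      exact Finset.measurable_prod s (fun j _ => hf j)
    have hmul := lintegral_mul_eq_lintegral_mul_lintegral_of_indepFun hps (hf i) hind
    simp only [Pi.mul_apply, Finset.prod_apply] at hmul
    calc ∫⁻ ω, f i ω * ∏ d ∈ s, f d ω ∂μ
        = ∫⁻ ω, (∏ d ∈ s, f d ω) * f i ω ∂μ := by simp_rw [mul_comm]
      _ = (∫⁻ ω, ∏ d ∈ s, f d ω ∂μ) * ∫⁻ ω, f i ω ∂μ := hmul
      _ = _ := by rw [ih]; exact mul_comm _ _

private lemma real_exp_eq_tsum' (x : ℝ) :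
    Real.exp x = ∑' n : ℕ, x ^ n / n.factorial := by
  rw [Real.exp_eq_exp_ℝ]
  exact congrFun NormedSpace.exp_eq_tsum_div x

private lemma exp_half_le_two' : Real.exp (1/2) ≤ 2 := by
  have h : Real.exp (1/2) ^ 2 = Real.exp 1 := by
    rw [← Real.exp_nat_mul]; norm_num
  have h2 : Real.exp (1/2) ^ 2 ≤ 2 ^ 2 := by
    rw [h]; nlinarith [Real.exp_one_lt_d9]
  exact (pow_le_pow_iff_left₀ (Real.exp_pos _).le (by norm_num) two_ne_zero).1 h2

private lemma poisson_exp_half' {Ω : Type*} [MeasurableSpace Ω] (P : Measure Ω)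
    (Zd : Ω → ℕ) (hm : Measurable Zd) (d : ℕ) (hd : 1 ≤ d)
    (hp : ∀ n : ℕ, P {ω | Zd ω = n} =
      ENNReal.ofReal (Real.exp (-(1 / d)) * (1 / d : ℝ) ^ n / n.factorial)) :
    ∫⁻ ω, ENNReal.ofReal (Real.exp ((Zd ω : ℝ) / 2)) ∂P
      ≤ ENNReal.ofReal (Real.exp (1 / d)) := by
  have hd0 : (0:ℝ) < d := by exact_mod_cast hd
  set c : ℝ := Real.exp (1/2) * (1/d) with hc
  have hc0 : 0 ≤ c := by rw [hc]; positivity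
  have hterm : ∀ n : ℕ,
      Real.exp ((n : ℝ)/2) * (Real.exp (-(1/d)) * (1/d:ℝ)^n / n.factorial)
        = Real.exp (-(1/d)) * (c ^ n / n.factorial) := by
    intro n
    rw [show ((n:ℝ)/2) = (n:ℝ) * (1/2) by ring, Real.exp_nat_mul, hc, mul_pow]
    ring
  have hsum : Summable (fun n : ℕ => Real.exp (-(1/d)) * (c ^ n / n.factorial)) :=
    (Real.summable_pow_div_factorial c).mul_left _
  have hmeasg : Measurable (fun n : ℕ => ENNReal.ofReal (Real.exp ((n:ℝ)/2))) :=
    measurable_from_nat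
  calc ∫⁻ ω, ENNReal.ofReal (Real.exp ((Zd ω : ℝ)/2)) ∂P
      = ∫⁻ n, ENNReal.ofReal (Real.exp ((n:ℝ)/2)) ∂(P.map Zd) :=
        (lintegral_map hmeasg hm).symm
    _ = ∑' n : ℕ, ENNReal.ofReal (Real.exp ((n:ℝ)/2)) * (P.map Zd) ({n} : Set ℕ) :=
        lintegral_countable' _
    _ = ∑' n : ℕ, ENNReal.ofReal (Real.exp (-(1/d)) * (c ^ n / n.factorial)) := by
        refine tsum_congr fun n => ?_
        rw [Measure.map_apply hm (measurableSet_singleton n)]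
        have hpre : Zd ⁻¹' ({n} : Set ℕ) = {ω | Zd ω = n} := rfl
        rw [hpre, hp n, ← ENNReal.ofReal_mul (Real.exp_nonneg _), hterm n]
    _ = ENNReal.ofReal (∑' n : ℕ, Real.exp (-(1/d)) * (c ^ n / n.factorial)) :=
        (ENNReal.ofReal_tsum_of_nonneg (fun n => by positivity) hsum).symm
    _ ≤ ENNReal.ofReal (Real.exp (1/d)) := by
        apply ENNReal.ofReal_le_ofReal
        rw [tsum_mul_left, ← real_exp_eq_tsum', ← Real.exp_add]
        apply Real.exp_le_exp.2
        have hle : c ≤ 2 * (1/d) := by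
          rw [hc]
          exact mul_le_mul_of_nonneg_right exp_half_le_two' (by positivity)
        linarith

/-- Let `{Z k}` be mutually independent Poisson random variables with parameters `1/k`,
and `Y a = ∑_{d ∣ a} d • Z d`. For every positive integer `r` there is a constant
`C_r > 0` depending only on `r` such that for all positive integers `a 1, ..., a r`,
`|E[∏ i, (Y (a i) − τ(a i))]| ≤ C_r (a 1)² ⋯ (a r)²`, where `τ(a)` is the number of
divisors of `a`. -/
theorem stmt3 {Ω : Type*} [MeasurableSpace Ω] (P : Measure Ω) [IsProbabilityMeasure P]
    (Z : ℕ → Ω → ℕ)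
    (hmeas : ∀ k, Measurable (Z k))
    (hpois : ∀ k : ℕ, 1 ≤ k → ∀ n : ℕ,
      P {ω | Z k ω = n} =
        ENNReal.ofReal (Real.exp (-(1 / k)) * (1 / k : ℝ) ^ n / n.factorial))
    (hindep : iIndepFun Z P)
    (r : ℕ) (hr : 0 < r) :
    ∃ C : ℝ, 0 < C ∧ ∀ a : Fin r → ℕ, (∀ i, 0 < a i) →
      |∫ ω, ∏ i, ((∑ d ∈ (a i).divisors, (d : ℝ) * (Z d ω : ℝ)) -
          ((a i).divisors.card : ℝ)) ∂P|
        ≤ C * ∏ i, (a i : ℝ) ^ 2 := by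
  classical
  refine ⟨2^r * r.factorial * Real.exp 2, by positivity, ?_⟩
  intro a ha
  set N : ℕ := ∏ i, a i with hN
  have hN1 : 1 ≤ N := Finset.one_le_prod' (fun i _ => ha i)
  have haN : ∀ i, a i ≤ N := fun i =>
    Finset.single_le_prod' (fun j _ => ha j) (mem_univ i)
  set S : Ω → ℝ := fun ω => ∑ d ∈ Finset.Icc 1 N, (Z d ω : ℝ) with hS
  have hS0 : ∀ ω, 0 ≤ S ω := fun ω => Finset.sum_nonneg fun d _ => by positivity
  set K : ℝ := (∏ i, (a i : ℝ)) * (2^r * r.factorial * Real.exp (1/2)) with hK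
  have hK0 : 0 ≤ K := by rw [hK]; positivity
  set F : Ω → ℝ := fun ω => ∏ i, ((∑ d ∈ (a i).divisors, (d : ℝ) * (Z d ω : ℝ)) -
      ((a i).divisors.card : ℝ)) with hF
  -- pointwise bound
  have key : ∀ ω, |F ω| ≤ K * ∏ d ∈ Finset.Icc 1 N, Real.exp ((Z d ω : ℝ)/2) := by
    intro ω
    have factor : ∀ i,
        |(∑ d ∈ (a i).divisors, (d:ℝ) * (Z d ω:ℝ)) - ((a i).divisors.card : ℝ)|
          ≤ (a i : ℝ) * (S ω + 1) := by
      intro i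
      have h1 : (∑ d ∈ (a i).divisors, (d:ℝ) * (Z d ω:ℝ)) ≤ (a i : ℝ) * S ω := by
        calc ∑ d ∈ (a i).divisors, (d:ℝ) * (Z d ω:ℝ)
            ≤ ∑ d ∈ (a i).divisors, (a i:ℝ) * (Z d ω:ℝ) := by
              refine Finset.sum_le_sum (fun d hd => ?_)
              have hdle : d ≤ a i := Nat.divisor_le hd
              exact mul_le_mul_of_nonneg_right (by exact_mod_cast hdle) (by positivity)
          _ = (a i:ℝ) * ∑ d ∈ (a i).divisors, (Z d ω:ℝ) := by rw [Finset.mul_sum]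
          _ ≤ (a i:ℝ) * S ω := by
              refine mul_le_mul_of_nonneg_left ?_ (by positivity)
              refine Finset.sum_le_sum_of_subset_of_nonneg ?_ (fun d _ _ => by positivity)
              intro d hd
              rw [Finset.mem_Icc]
              exact ⟨Nat.pos_of_mem_divisors hd, (Nat.divisor_le hd).trans (haN i)⟩
      have h2 : ((a i).divisors.card : ℝ) ≤ (a i : ℝ) := by
        have hcard : (a i).divisors.card ≤ a i := by
          calc (a i).divisors.card ≤ (Finset.Icc 1 (a i)).card :=
              Finset.card_le_card (fun d hd => Finset.mem_Icc.2
                ⟨Nat.pos_of_mem_divisors hd, Nat.divisor_le hd⟩)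
            _ = a i := by rw [Nat.card_Icc]; omega
        exact_mod_cast hcard
      have h3 : 0 ≤ ∑ d ∈ (a i).divisors, (d:ℝ) * (Z d ω:ℝ) :=
        Finset.sum_nonneg fun d _ => by positivity
      calc |(∑ d ∈ (a i).divisors, (d:ℝ) * (Z d ω:ℝ)) - ((a i).divisors.card : ℝ)|
          ≤ |∑ d ∈ (a i).divisors, (d:ℝ) * (Z d ω:ℝ)| + |((a i).divisors.card : ℝ)| :=
            abs_sub _ _
        _ ≤ (a i : ℝ) * S ω + (a i : ℝ) := by
            rw [abs_of_nonneg h3, abs_of_nonneg (by positivity)]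
            exact add_le_add h1 h2
        _ = (a i : ℝ) * (S ω + 1) := by ring
    have hpow : (S ω + 1)^r
        ≤ 2^r * r.factorial * Real.exp (1/2) * ∏ d ∈ Finset.Icc 1 N, Real.exp ((Z d ω:ℝ)/2) := by
      have hx : (0:ℝ) ≤ (S ω + 1)/2 := by linarith [hS0 ω]
      have h4 : ((S ω + 1)/2)^r ≤ r.factorial * Real.exp ((S ω + 1)/2) := by
        have hple := Real.pow_div_factorial_le_exp _ hx r
        rw [div_le_iff₀ (by positivity)] at hple
        linarith
      have h5 : (S ω + 1)^r = 2^r * ((S ω + 1)/2)^r := by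
        rw [← mul_pow]; congr 1; ring
      have h6 : Real.exp ((S ω + 1)/2)
          = Real.exp (1/2) * ∏ d ∈ Finset.Icc 1 N, Real.exp ((Z d ω:ℝ)/2) := by
        rw [← Real.exp_sum, ← Real.exp_add]
        congr 1
        rw [hS, ← Finset.sum_div]
        ring
      calc (S ω + 1)^r = 2^r * ((S ω + 1)/2)^r := h5
        _ ≤ 2^r * (r.factorial * Real.exp ((S ω + 1)/2)) := by
            exact mul_le_mul_of_nonneg_left h4 (by positivity)
        _ = 2^r * r.factorial * Real.exp (1/2)
            * ∏ d ∈ Finset.Icc 1 N, Real.exp ((Z d ω:ℝ)/2) := by rw [h6]; ring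
    calc |F ω| = ∏ i, |(∑ d ∈ (a i).divisors, (d:ℝ) * (Z d ω:ℝ))
        - ((a i).divisors.card : ℝ)| := by rw [hF]; exact Finset.abs_prod _ _
      _ ≤ ∏ i, (a i : ℝ) * (S ω + 1) :=
          Finset.prod_le_prod (fun i _ => abs_nonneg _) (fun i _ => factor i)
      _ = (∏ i, (a i : ℝ)) * (S ω + 1)^r := by
          rw [Finset.prod_mul_distrib, Finset.prod_const, Finset.card_univ, Fintype.card_fin]
      _ ≤ (∏ i, (a i : ℝ)) * (2^r * r.factorial * Real.exp (1/2)
          * ∏ d ∈ Finset.Icc 1 N, Real.exp ((Z d ω:ℝ)/2)) := by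
          refine mul_le_mul_of_nonneg_left hpow ?_
          exact Finset.prod_nonneg fun i _ => by positivity
      _ = K * ∏ d ∈ Finset.Icc 1 N, Real.exp ((Z d ω:ℝ)/2) := by rw [hK]; ring
  -- measurability
  have hWmeas : ∀ d : ℕ, Measurable (fun ω => ENNReal.ofReal (Real.exp ((Z d ω:ℝ)/2))) := by
    intro d
    exact Measurable.ennreal_ofReal (Real.measurable_exp.comp
      ((measurable_from_nat.comp (hmeas d)).div_const 2))
  have hWind : iIndepFun
      (fun d ω => ENNReal.ofReal (Real.exp ((Z d ω:ℝ)/2))) P :=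
    hindep.comp (fun _ n => ENNReal.ofReal (Real.exp ((n:ℝ)/2))) (fun _ => measurable_from_nat)
  -- lintegral chain
  have chain : ∫⁻ ω, ENNReal.ofReal |F ω| ∂P
      ≤ ENNReal.ofReal ((2^r * r.factorial * Real.exp 2) * ∏ i, (a i:ℝ)^2) := by
    have l1 : ∫⁻ ω, ENNReal.ofReal |F ω| ∂P
        ≤ ∫⁻ ω, ENNReal.ofReal K
            * ∏ d ∈ Finset.Icc 1 N, ENNReal.ofReal (Real.exp ((Z d ω:ℝ)/2)) ∂P := by
      refine lintegral_mono fun ω => ?_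
      calc ENNReal.ofReal |F ω|
          ≤ ENNReal.ofReal (K * ∏ d ∈ Finset.Icc 1 N, Real.exp ((Z d ω:ℝ)/2)) :=
            ENNReal.ofReal_le_ofReal (key ω)
        _ = ENNReal.ofReal K
            * ∏ d ∈ Finset.Icc 1 N, ENNReal.ofReal (Real.exp ((Z d ω:ℝ)/2)) := by
            rw [ENNReal.ofReal_mul hK0,
              ENNReal.ofReal_prod_of_nonneg (fun d _ => Real.exp_nonneg _)]
    have l2 : ∫⁻ ω, ENNReal.ofReal K
          * ∏ d ∈ Finset.Icc 1 N, ENNReal.ofReal (Real.exp ((Z d ω:ℝ)/2)) ∂P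
        = ENNReal.ofReal K * ∏ d ∈ Finset.Icc 1 N,
            ∫⁻ ω, ENNReal.ofReal (Real.exp ((Z d ω:ℝ)/2)) ∂P := by
      rw [lintegral_const_mul _ (Finset.measurable_prod _ (fun d _ => hWmeas d)),
        lintegral_finset_prod_of_iIndep hWmeas hWind]
    have l3 : ∏ d ∈ Finset.Icc 1 N, ∫⁻ ω, ENNReal.ofReal (Real.exp ((Z d ω:ℝ)/2)) ∂P
        ≤ ENNReal.ofReal (Real.exp 1 * N) := by
      calc ∏ d ∈ Finset.Icc 1 N, ∫⁻ ω, ENNReal.ofReal (Real.exp ((Z d ω:ℝ)/2)) ∂P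
          ≤ ∏ d ∈ Finset.Icc 1 N, ENNReal.ofReal (Real.exp (1/(d:ℝ))) := by
            refine Finset.prod_le_prod' fun d hd => ?_
            have hd1 : 1 ≤ d := (Finset.mem_Icc.1 hd).1
            exact poisson_exp_half' P (Z d) (hmeas d) d hd1 (hpois d hd1)
        _ = ENNReal.ofReal (∏ d ∈ Finset.Icc 1 N, Real.exp (1/(d:ℝ))) :=
            (ENNReal.ofReal_prod_of_nonneg (fun d _ => Real.exp_nonneg _)).symm
        _ ≤ ENNReal.ofReal (Real.exp 1 * N) := by
            apply ENNReal.ofReal_le_ofReal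
            rw [← Real.exp_sum]
            have hsum : ∑ d ∈ Finset.Icc 1 N, 1/(d:ℝ) = ((harmonic N : ℚ) : ℝ) := by
              rw [harmonic_eq_sum_Icc]
              push_cast
              simp [one_div]
            calc Real.exp (∑ d ∈ Finset.Icc 1 N, 1/(d:ℝ))
                ≤ Real.exp (1 + Real.log N) := by
                  apply Real.exp_le_exp.2
                  rw [hsum]
                  exact harmonic_le_one_add_log N
              _ = Real.exp 1 * N := by
                  rw [Real.exp_add, Real.exp_log (by exact_mod_cast hN1.trans_lt' zero_lt_one)]
    have l5 : K * (Real.exp 1 * N) ≤ (2^r * r.factorial * Real.exp 2) * ∏ i, (a i:ℝ)^2 := by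
      have hNa : (N:ℝ) = ∏ i, (a i:ℝ) := by rw [hN]; push_cast; rfl
      have hee : Real.exp (1/2) * Real.exp 1 ≤ Real.exp 2 := by
        rw [← Real.exp_add]; exact Real.exp_le_exp.2 (by norm_num)
      have hpa : (0:ℝ) ≤ ∏ i, (a i:ℝ) := Finset.prod_nonneg fun i _ => by positivity
      calc K * (Real.exp 1 * N)
          = (2^r * r.factorial) * (Real.exp (1/2) * Real.exp 1) * (∏ i, (a i:ℝ))^2 := by
            rw [hK, hNa]; ring
        _ ≤ (2^r * r.factorial) * Real.exp 2 * (∏ i, (a i:ℝ))^2 := by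
            have h2r : (0:ℝ) ≤ 2^r * r.factorial := by positivity
            exact mul_le_mul_of_nonneg_right
              (mul_le_mul_of_nonneg_left hee h2r) (sq_nonneg _)
        _ = (2^r * r.factorial * Real.exp 2) * ∏ i, (a i:ℝ)^2 := by
            rw [← Finset.prod_pow]
    calc ∫⁻ ω, ENNReal.ofReal |F ω| ∂P
        ≤ ENNReal.ofReal K * ∏ d ∈ Finset.Icc 1 N,
            ∫⁻ ω, ENNReal.ofReal (Real.exp ((Z d ω:ℝ)/2)) ∂P := l1.trans (le_of_eq l2)
      _ ≤ ENNReal.ofReal K * ENNReal.ofReal (Real.exp 1 * N) := mul_le_mul_right l3 _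
      _ = ENNReal.ofReal (K * (Real.exp 1 * N)) := (ENNReal.ofReal_mul hK0).symm
      _ ≤ ENNReal.ofReal ((2^r * r.factorial * Real.exp 2) * ∏ i, (a i:ℝ)^2) :=
          ENNReal.ofReal_le_ofReal l5
  have step1 : |∫ ω, F ω ∂P| ≤ (∫⁻ ω, ENNReal.ofReal |F ω| ∂P).toReal := by
    simpa [Real.norm_eq_abs] using norm_integral_le_lintegral_norm (μ := P) F
  refine step1.trans (ENNReal.toReal_le_of_le_ofReal ?_ chain)
  have hpa2 : (0:ℝ) ≤ ∏ i, (a i:ℝ)^2 := Finset.prod_nonneg fun i _ => by positivity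
  positivity
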